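/- arXiv:1704.02947 — 3 statements merged into one kernel-verified Lean document; each statement's English description precedes it below -/
import Mathlib

section
/- Let (j1,j2,j3) be an admissible triple and a,b ∈ {-1,+1}. Then the coefficient C_{a,b}(j1,j2,j3) is nonzero if and only if the triple (j1+a, j2+b, j3) is admissible. Here C_{a,b}(j1,j2,j3) = a·b·([ (a j1 + b j2 + j3)/2, (a+b+2)/2 ]·[ (a j1 + b j2 - j3)/2, (a+b)/2 ]·[j1-1,2]·[j2-1,2]) / ([j1,(a+3)/2]·[j1-1,(a+3)/2]·[j2,(a+3)/2]·[j2-1,(a+3)/2]), where [n,m] = (q^{n/2} t^{m/2} - q^{-n/2} t^{-m/2})/(q^{1/2} - q^{-1/2}), working in the field of rational functions in q^{1/4}, t^{1/4} over ℂ (with q, t generic so that none of the bracket factors appearing in the denominator vanish). -/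
/-- A triple of integers `(j1,j2,j3)` is admissible if each is nonnegative,
`|j1 - j2| ≤ j3 ≤ j1 + j2`, and `j1 + j2 + j3` is even. -/
def Admissible (j1 j2 j3 : ℤ) : Prop :=
  0 ≤ j1 ∧ 0 ≤ j2 ∧ 0 ≤ j3 ∧ |j1 - j2| ≤ j3 ∧ j3 ≤ j1 + j2 ∧ Even (j1 + j2 + j3)

/-- The bracket `[n,m]_{q,t} = (q^{n/2} t^{m/2} - q^{-n/2} t^{-m/2})/(q^{1/2} - q^{-1/2})`,
expressed via the quarter roots `q4 = q^{1/4}`, `t4 = t^{1/4}`. -/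
noncomputable def br {K : Type*} [Field K] (q4 t4 : K) (n m : ℤ) : K :=
  (q4 ^ (2 * n) * t4 ^ (2 * m) - q4 ^ (-(2 * n)) * t4 ^ (-(2 * m))) /
    (q4 ^ (2 : ℤ) - q4 ^ (-2 : ℤ))

/-- The genus-two Pieri coefficient `C_{a,b}(j1,j2,j3)`. -/
noncomputable def Cc {K : Type*} [Field K] (q4 t4 : K) (a b j1 j2 j3 : ℤ) : K :=
  ((a * b : ℤ) : K) *
    (br q4 t4 ((a * j1 + b * j2 + j3) / 2) ((a + b + 2) / 2) *
      br q4 t4 ((a * j1 + b * j2 - j3) / 2) ((a + b) / 2) *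
      br q4 t4 (j1 - 1) 2 * br q4 t4 (j2 - 1) 2) /
    (br q4 t4 j1 ((a + 3) / 2) * br q4 t4 (j1 - 1) ((a + 3) / 2) *
      br q4 t4 j2 ((a + 3) / 2) * br q4 t4 (j2 - 1) ((a + 3) / 2))

/-- For generic `q,t` (encoded by the bracket vanishing exactly at `n = m = 0`),
the Pieri coefficient `C_{a,b}(j1,j2,j3)` is nonzero iff `(j1+a, j2+b, j3)` is admissible. -/
theorem Cc_ne_zero_iff_admissible {K : Type*} [Field K] (q4 t4 : K)
    (hq4 : q4 ≠ 0) (ht4 : t4 ≠ 0)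
    (hgen : ∀ n m : ℤ, br q4 t4 n m = 0 ↔ n = 0 ∧ m = 0)
    (j1 j2 j3 a b : ℤ) (hadm : Admissible j1 j2 j3)
    (ha : a = -1 ∨ a = 1) (hb : b = -1 ∨ b = 1) :
    Cc q4 t4 a b j1 j2 j3 ≠ 0 ↔ Admissible (j1 + a) (j2 + b) j3 := by
  obtain ⟨h1, h2, h3, h4, h5, h6⟩ := hadm
  rw [abs_sub_le_iff] at h4
  rw [Int.even_iff] at h6
  rcases ha with rfl | rfl <;> rcases hb with rfl | rfl <;>
  · rw [Cc, div_ne_zero_iff]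
    norm_num [mul_ne_zero_iff, ne_eq, hgen, Admissible, abs_sub_le_iff, Int.even_iff]
    omega
end

section
/- For an admissible triple of the form (ℓ, ℓ, 0) with ℓ ≥ 0, the genus-two Pieri rule in the variable x12 reduces to: (x12 + x12^{-1})·Ψ_{ℓ,ℓ,0} = t^{1/2}·(1 - q^ℓ t)/(1 - q^ℓ t^2)·Ψ_{ℓ+1,ℓ+1,0} + t^{-1/2}·(1 - q^ℓ)(1 - q^{ℓ-1} t^2)^2/((1 - q^ℓ t)(1 - q^{ℓ-1} t)^2)·Ψ_{ℓ-1,ℓ-1,0}. Equivalently, in terms of the coefficients: C_{+1,+1}(ℓ,ℓ,0) = t^{1/2}(1 - q^ℓ t)/(1 - q^ℓ t^2), C_{-1,-1}(ℓ,ℓ,0) = t^{-1/2}(1-q^ℓ)(1-q^{ℓ-1}t^2)^2/((1-q^ℓ t)(1-q^{ℓ-1}t)^2), and C_{+1,-1}(ℓ,ℓ,0) = C_{-1,+1}(ℓ,ℓ,0) = 0. -/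
set_option maxHeartbeats 1000000 in
/-- Specialization of the genus-two Pieri coefficients at `(ℓ,ℓ,0)`:
`C_{+1,+1} = t^{1/2}(1-q^ℓ t)/(1-q^ℓ t²)`,
`C_{-1,-1} = t^{-1/2}(1-q^ℓ)(1-q^{ℓ-1}t²)²/((1-q^ℓ t)(1-q^{ℓ-1}t)²)`, and
`C_{+1,-1} = C_{-1,+1} = 0`.  Here `q = q4^4`, `t = t4^4`. -/
theorem pieri_at_diagonal {K : Type*} [Field K] (q4 t4 : K)
    (hq4 : q4 ≠ 0) (ht4 : t4 ≠ 0)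
    (hgen : ∀ n m : ℤ, br q4 t4 n m = 0 ↔ n = 0 ∧ m = 0)
    (ℓ : ℤ) (hℓ : 0 ≤ ℓ) :
    Cc q4 t4 1 1 ℓ ℓ 0
        = t4 ^ 2 * (1 - q4 ^ (4 * ℓ) * t4 ^ 4) / (1 - q4 ^ (4 * ℓ) * t4 ^ 8) ∧
      Cc q4 t4 (-1) (-1) ℓ ℓ 0
        = t4 ^ (-2 : ℤ) * ((1 - q4 ^ (4 * ℓ)) * (1 - q4 ^ (4 * ℓ - 4) * t4 ^ 8) ^ 2) /
            ((1 - q4 ^ (4 * ℓ) * t4 ^ 4) * (1 - q4 ^ (4 * ℓ - 4) * t4 ^ 4) ^ 2) ∧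
      Cc q4 t4 1 (-1) ℓ ℓ 0 = 0 ∧
      Cc q4 t4 (-1) 1 ℓ ℓ 0 = 0 := by
  have hbr : ∀ n m : ℤ, ¬(n = 0 ∧ m = 0) → br q4 t4 n m ≠ 0 :=
    fun n m h hc => h ((hgen n m).mp hc)
  have hnum : ∀ n m : ℤ, ¬(n = 0 ∧ m = 0) →
      q4 ^ (2*n) * t4 ^ (2*m) - q4 ^ (-(2*n)) * t4 ^ (-(2*m)) ≠ 0 :=
    fun n m h hc => h ((hgen n m).mp (by rw [br, hc, zero_div]))
  have hd : q4 ^ (2:ℤ) - q4 ^ (-2:ℤ) ≠ 0 := by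
    have := hnum 1 0 (by simp)
    norm_num at this
    convert this using 2 <;> norm_num
  -- abbreviation
  set P : K := q4 ^ (2*ℓ) with hP
  have hPne : P ≠ 0 := zpow_ne_zero _ hq4
  -- exponent conversions
  have E1 : q4 ^ (4*ℓ) = P * P := by rw [hP, ← zpow_add₀ hq4]; ring_nf
  have E2 : q4 ^ (4*ℓ-4) = P * P * (q4 ^ (4:ℕ))⁻¹ := by
    rw [hP, ← zpow_add₀ hq4, show (2*ℓ + 2*ℓ : ℤ) = 4*ℓ by ring,
      show (4*ℓ-4 : ℤ) = 4*ℓ + (-4) by ring, zpow_add₀ hq4, zpow_neg]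
    norm_cast
  have E3 : q4 ^ (2*(ℓ-1)) = P * (q4 ^ (2:ℕ))⁻¹ := by
    rw [hP, show (2*(ℓ-1) : ℤ) = 2*ℓ + (-2) by ring, zpow_add₀ hq4, zpow_neg]
    norm_cast
  have E4 : q4 ^ (-(2*(ℓ-1))) = P⁻¹ * q4 ^ (2:ℕ) := by
    rw [zpow_neg, E3, mul_inv, inv_inv]
  have E5 : q4 ^ (-(2*ℓ)) = P⁻¹ := by rw [zpow_neg, hP]
  have E6 : q4 ^ (2*(-ℓ)) = P⁻¹ := by
    rw [show (2*(-ℓ) : ℤ) = -(2*ℓ) by ring, zpow_neg, hP]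
  have E7 : q4 ^ (-(2*(-ℓ))) = P := by
    rw [show (-(2*(-ℓ)) : ℤ) = 2*ℓ by ring, hP]
  have T1 : t4 ^ (2*(1:ℤ)) = t4 ^ (2:ℕ) := by norm_num
  have T2 : t4 ^ (2*(2:ℤ)) = t4 ^ (4:ℕ) := by norm_num
  have T1' : t4 ^ (-(2*(1:ℤ))) = (t4 ^ (2:ℕ))⁻¹ := by rw [zpow_neg, T1]
  have T2' : t4 ^ (-(2*(2:ℤ))) = (t4 ^ (4:ℕ))⁻¹ := by rw [zpow_neg, T2]
  have T0 : t4 ^ (2*(0:ℤ)) = 1 := by norm_num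
  have T0' : t4 ^ (-(2*(0:ℤ))) = 1 := by norm_num
  have Tm1 : t4 ^ (2*(-1:ℤ)) = (t4 ^ (2:ℕ))⁻¹ := by
    rw [show (2*(-1:ℤ)) = -(2*(1:ℤ)) by ring]; exact T1'
  have Tm1' : t4 ^ (-(2*(-1:ℤ))) = t4 ^ (2:ℕ) := by
    rw [show (-(2*(-1:ℤ))) = 2*(1:ℤ) by ring]; exact T1
  have Tr : t4 ^ (-2:ℤ) = (t4 ^ (2:ℕ))⁻¹ := by rw [zpow_neg]; norm_cast
  -- nonzero facts in atom language
  have X1 : P * t4 ^ (2:ℕ) - P⁻¹ * (t4 ^ (2:ℕ))⁻¹ ≠ 0 := by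
    have := hnum ℓ 1 (by simp); rwa [T1, E5, T1'] at this
  have X2 : P * t4 ^ (4:ℕ) - P⁻¹ * (t4 ^ (4:ℕ))⁻¹ ≠ 0 := by
    have := hnum ℓ 2 (by simp); rwa [T2, E5, T2'] at this
  have X1' : P * (q4 ^ (2:ℕ))⁻¹ * t4 ^ (2:ℕ) - P⁻¹ * q4 ^ (2:ℕ) * (t4 ^ (2:ℕ))⁻¹ ≠ 0 := by
    have := hnum (ℓ-1) 1 (by simp); rwa [T1, E3, E4, T1'] at this
  -- (1 - ...) nonzero facts
  have ht2 : (t4 : K) ^ (2:ℕ) ≠ 0 := pow_ne_zero _ ht4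
  have ht4' : (t4 : K) ^ (4:ℕ) ≠ 0 := pow_ne_zero _ ht4
  have hq2 : (q4 : K) ^ (2:ℕ) ≠ 0 := pow_ne_zero _ hq4
  have G1 : (1:K) - P * P * t4 ^ (4:ℕ) ≠ 0 := by
    intro h; apply X1
    have : P * t4 ^ (2:ℕ) - P⁻¹ * (t4 ^ (2:ℕ))⁻¹
        = P⁻¹ * (t4^(2:ℕ))⁻¹ * (P * P * t4^(4:ℕ) - 1) := by field_simp
    rw [this, show P * P * t4^(4:ℕ) - 1 = -(1 - P * P * t4^(4:ℕ)) by ring, h]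
    ring
  have G2 : (1:K) - P * P * t4 ^ (8:ℕ) ≠ 0 := by
    intro h; apply X2
    have : P * t4 ^ (4:ℕ) - P⁻¹ * (t4 ^ (4:ℕ))⁻¹
        = P⁻¹ * (t4^(4:ℕ))⁻¹ * (P * P * t4^(8:ℕ) - 1) := by field_simp
    rw [this, show P * P * t4^(8:ℕ) - 1 = -(1 - P * P * t4^(8:ℕ)) by ring, h]
    ring
  have G3 : (1:K) - P * P * (q4 ^ (4:ℕ))⁻¹ * t4 ^ (4:ℕ) ≠ 0 := by
    intro h; apply X1'
    have : P * (q4 ^ (2:ℕ))⁻¹ * t4 ^ (2:ℕ) - P⁻¹ * q4 ^ (2:ℕ) * (t4 ^ (2:ℕ))⁻¹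
        = P⁻¹ * q4^(2:ℕ) * (t4^(2:ℕ))⁻¹ * (P * P * (q4^(4:ℕ))⁻¹ * t4^(4:ℕ) - 1) := by
      field_simp
    rw [this, show P * P * (q4^(4:ℕ))⁻¹ * t4^(4:ℕ) - 1
        = -(1 - P * P * (q4^(4:ℕ))⁻¹ * t4^(4:ℕ)) by ring, h]
    ring
  refine ⟨?_, ?_, ?_, ?_⟩
  · -- a = b = 1
    have e1 : (1 * ℓ + 1 * ℓ + (0:ℤ)) / 2 = ℓ := by omega
    have e3 : (1 * ℓ + 1 * ℓ - (0:ℤ)) / 2 = ℓ := by omega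
    rw [Cc, e1, e3, show ((1:ℤ) + 1 + 2) / 2 = 2 by norm_num,
      show ((1:ℤ) + 1) / 2 = 1 by norm_num, show ((1:ℤ) + 3) / 2 = 2 by norm_num]
    have b1 := hbr ℓ 2 (by simp)
    have b2 := hbr (ℓ-1) 2 (by simp)
    have step : ((1 * 1 : ℤ) : K) *
        (br q4 t4 ℓ 2 * br q4 t4 ℓ 1 * br q4 t4 (ℓ-1) 2 * br q4 t4 (ℓ-1) 2) /
        (br q4 t4 ℓ 2 * br q4 t4 (ℓ-1) 2 * br q4 t4 ℓ 2 * br q4 t4 (ℓ-1) 2)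
        = br q4 t4 ℓ 1 / br q4 t4 ℓ 2 := by
      field_simp; ring
    rw [step, br, br, E5, T1, T1', T2, T2', E1, ← hP,
      div_div_div_cancel_right₀ hd, div_eq_div_iff X2 G2]
    field_simp
    ring
  · -- a = b = -1
    have e1 : ((-1) * ℓ + (-1) * ℓ + (0:ℤ)) / 2 = -ℓ := by omega
    have e3 : ((-1) * ℓ + (-1) * ℓ - (0:ℤ)) / 2 = -ℓ := by omega
    rw [Cc, e1, e3, show ((-1:ℤ) + (-1) + 2) / 2 = 0 by norm_num,
      show ((-1:ℤ) + (-1)) / 2 = -1 by norm_num, show ((-1:ℤ) + 3) / 2 = 1 by norm_num]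
    have comb : ∀ n1 n2 n3 n4 m1 m2 m3 m4 D : K, D ≠ 0 →
        (n1/D*(n2/D)*(n3/D)*(n4/D)) / (m1/D*(m2/D)*(m3/D)*(m4/D))
          = (n1*n2*n3*n4)/(m1*m2*m3*m4) := by
      intro n1 n2 n3 n4 m1 m2 m3 m4 D hD
      rw [show n1/D*(n2/D)*(n3/D)*(n4/D) = (n1*n2*n3*n4)/D^4 by ring,
        show m1/D*(m2/D)*(m3/D)*(m4/D) = (m1*m2*m3*m4)/D^4 by ring,
        div_div_div_cancel_right₀ (pow_ne_zero 4 hD)]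
    rw [show (((-1) * (-1) : ℤ) : K) = 1 by norm_num, one_mul]
    simp only [br]
    rw [comb _ _ _ _ _ _ _ _ _ hd]
    rw [E6, E7, T0, T0', Tm1, Tm1', E3, E4, T2, T2', E5, T1, T1', E1, E2, Tr, ← hP]
    rw [div_eq_div_iff (by exact mul_ne_zero (mul_ne_zero (mul_ne_zero X1 X1') X1) X1')
      (mul_ne_zero G1 (pow_ne_zero 2 G3))]
    field_simp
    ring
  · have e1 : (1 * ℓ + (-1) * ℓ - (0:ℤ)) / 2 = 0 := by omega
    have hb0 : br q4 t4 0 0 = 0 := by simp [br]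
    rw [Cc, e1, show ((1:ℤ) + (-1)) / 2 = 0 by norm_num, hb0]
    ring
  · have e1 : ((-1) * ℓ + 1 * ℓ - (0:ℤ)) / 2 = 0 := by omega
    have hb0 : br q4 t4 0 0 = 0 := by simp [br]
    rw [Cc, e1, show ((-1:ℤ) + 1) / 2 = 0 by norm_num, hb0]
    ring
end

section
/- With Ô_A, Ô_B as in the A1 spherical DAHA polynomial representation, the relation (q^{1/2} - q^{-1/2})^2 Ô_A = −Ô_B Ô_B Ô_A + (q^{1/2} + q^{-1/2}) Ô_B Ô_A Ô_B − Ô_A Ô_B Ô_B holds as operators on k(x). -/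
/-- The `A₁` Macdonald difference operator `Ô_A` of the polynomial representation of
spherical DAHA, acting on a field `F` of "functions of `x`" equipped with the shift
automorphism `σ : f(x) ↦ f(q^{1/2} x)`. -/
noncomputable def OA {F : Type*} [Field F] (σ : F ≃+* F) (x t : F) (f : F) : F :=
  (x⁻¹ - t * x) / (x⁻¹ - x) * σ f + (x - t * x⁻¹) / (x - x⁻¹) * σ.symm f

/-- The multiplication operator `Ô_B : f ↦ (x + x⁻¹) f`. -/
noncomputable def OB {F : Type*} [Field F] (x : F) (f : F) : F := (x + x⁻¹) * f

/-- The q-deformed Serre-type relation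
`(q^{1/2}-q^{-1/2})² Ô_A = -Ô_B Ô_B Ô_A + (q^{1/2}+q^{-1/2}) Ô_B Ô_A Ô_B - Ô_A Ô_B Ô_B`
of `A₁` spherical DAHA, as operators on the function field. -/
theorem daha_relation_BAB {F : Type*} [Field F] (σ : F ≃+* F) (x q2 t : F)
    (hσx : σ x = q2 * x) (hσq : σ q2 = q2) (hσt : σ t = t)
    (hx : x ≠ 0) (hq2 : q2 ≠ 0) (hx1 : x ^ 2 ≠ 1) :
    ∀ f : F,
      (q2 - q2⁻¹) ^ 2 * OA σ x t f
        = -(OB x (OB x (OA σ x t f)))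
          + (q2 + q2⁻¹) * OB x (OA σ x t (OB x f))
          - OA σ x t (OB x (OB x f)) := by
  intro f
  have hσix : σ.symm x = q2⁻¹ * x := by
    apply σ.injective
    simp [map_mul, map_inv₀, hσx, hσq]
    field_simp
  have hσit : σ.symm t = t := by
    apply σ.injective; simp [hσt]
  have hxy : x * x⁻¹ = 1 := mul_inv_cancel₀ hx
  have hqr : q2 * q2⁻¹ = 1 := mul_inv_cancel₀ hq2
  have hqr' : q2⁻¹ * q2 = 1 := inv_mul_cancel₀ hq2
  have hP : (q2-q2⁻¹)^2 + (x+x⁻¹)^2 - (q2+q2⁻¹)*((x+x⁻¹)*(q2*x+(q2*x)⁻¹))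
      + (q2*x+(q2*x)⁻¹)^2 = 0 := by
    simp only [mul_inv]
    linear_combination (-(x^2 + x⁻¹^2 + 2)) * hqr + (-(q2^2 + q2⁻¹^2 - 2)) * hxy
  have hP' : (q2-q2⁻¹)^2 + (x+x⁻¹)^2 - (q2+q2⁻¹)*((x+x⁻¹)*(q2⁻¹*x+(q2⁻¹*x)⁻¹))
      + (q2⁻¹*x+(q2⁻¹*x)⁻¹)^2 = 0 := by
    simp only [mul_inv, inv_inv]
    linear_combination (-(x^2 + x⁻¹^2 + 2)) * hqr' + (-(q2⁻¹^2 + q2^2 - 2)) * hxy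
  have key1 : (q2 - q2⁻¹)^2 * ((x⁻¹ - t*x)/(x⁻¹ - x))
      = -((x+x⁻¹)*((x+x⁻¹) * ((x⁻¹ - t*x)/(x⁻¹ - x))))
        + (q2+q2⁻¹) * ((x+x⁻¹) * (((x⁻¹ - t*x)/(x⁻¹-x)) * (q2*x + (q2*x)⁻¹)))
        - ((x⁻¹ - t*x)/(x⁻¹-x)) * ((q2*x + (q2*x)⁻¹) * (q2*x + (q2*x)⁻¹)) := by
    linear_combination ((x⁻¹ - t*x)/(x⁻¹ - x)) * hP
  have key2 : (q2 - q2⁻¹)^2 * ((x - t*x⁻¹)/(x - x⁻¹))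
      = -((x+x⁻¹)*((x+x⁻¹) * ((x - t*x⁻¹)/(x - x⁻¹))))
        + (q2+q2⁻¹) * ((x+x⁻¹) * (((x - t*x⁻¹)/(x-x⁻¹)) * (q2⁻¹*x + (q2⁻¹*x)⁻¹)))
        - ((x - t*x⁻¹)/(x-x⁻¹)) * ((q2⁻¹*x + (q2⁻¹*x)⁻¹) * (q2⁻¹*x + (q2⁻¹*x)⁻¹)) := by
    linear_combination ((x - t*x⁻¹)/(x - x⁻¹)) * hP'
  simp only [OA, OB, map_mul, map_add, map_inv₀, hσx, hσq, hσt, hσix, hσit]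
  linear_combination (σ f) * key1 + (σ.symm f) * key2
end
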